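/- arXiv:1507.00509 — 2 statements merged into one kernel-verified Lean document; each statement's English description precedes it below -/
import Mathlib

section
/- For any n×n matrix Φ, the induced two-norm satisfies ‖Φ‖₂ ≤ max_{i,j : a_{ij} ≠ 0} √(r_i(Φ)·c_j(Φ)), where r_i(Φ) = Σ_j |a_{ij}| is the i-th row sum and c_j(Φ) = Σ_i |a_{ij}| is the j-th column sum. -/
open scoped BigOperators

/-- For a nonzero `n×n` matrix `Φ`, the induced two-norm satisfies
`‖Φ‖₂ ≤ max_{i,j : Φ i j ≠ 0} √(r_i(Φ)·c_j(Φ))`, where `r_i` is the `i`-th row sum of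
absolute values and `c_j` the `j`-th column sum. -/
theorem two_norm_le_max_sqrt_row_col (n : ℕ) (Φ : Matrix (Fin n) (Fin n) ℝ) (hΦ : Φ ≠ 0) :
    ‖Matrix.toEuclideanCLM (𝕜 := ℝ) Φ‖ ≤
      ⨆ p : {p : Fin n × Fin n // Φ p.1 p.2 ≠ 0},
        Real.sqrt ((∑ j, |Φ p.1.1 j|) * (∑ i, |Φ i p.1.2|)) := by
  classical
  set M : ℝ := ⨆ p : {p : Fin n × Fin n // Φ p.1 p.2 ≠ 0},
      Real.sqrt ((∑ j, |Φ p.1.1 j|) * (∑ i, |Φ i p.1.2|)) with hM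
  have hex : ∃ p : Fin n × Fin n, Φ p.1 p.2 ≠ 0 := by
    by_contra h
    push_neg at h
    exact hΦ (by ext i j; exact h (i, j))
  have hne : Nonempty {p : Fin n × Fin n // Φ p.1 p.2 ≠ 0} := ⟨⟨hex.choose, hex.choose_spec⟩⟩
  have hbdd : BddAbove (Set.range fun p : {p : Fin n × Fin n // Φ p.1 p.2 ≠ 0} =>
      Real.sqrt ((∑ j, |Φ p.1.1 j|) * (∑ i, |Φ i p.1.2|))) :=
    (Set.finite_range _).bddAbove
  have hM0 : 0 ≤ M := by
    obtain ⟨p⟩ := hne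
    exact le_trans (Real.sqrt_nonneg _) (le_ciSup hbdd p)
  -- key estimate: for every nonzero entry, `r_i * c_j ≤ M ^ 2`
  have hkey : ∀ i j, Φ i j ≠ 0 → (∑ j', |Φ i j'|) * (∑ i', |Φ i' j|) ≤ M ^ 2 := by
    intro i j hij
    have h1 : Real.sqrt ((∑ j', |Φ i j'|) * (∑ i', |Φ i' j|)) ≤ M :=
      le_ciSup hbdd (⟨(i, j), hij⟩ : {p : Fin n × Fin n // Φ p.1 p.2 ≠ 0})
    have h2 : 0 ≤ (∑ j', |Φ i j'|) * (∑ i', |Φ i' j|) :=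
      mul_nonneg (Finset.sum_nonneg fun _ _ => abs_nonneg _)
        (Finset.sum_nonneg fun _ _ => abs_nonneg _)
    calc (∑ j', |Φ i j'|) * (∑ i', |Φ i' j|)
        = Real.sqrt ((∑ j', |Φ i j'|) * (∑ i', |Φ i' j|)) ^ 2 := (Real.sq_sqrt h2).symm
      _ ≤ M ^ 2 := by
          exact pow_le_pow_left₀ (Real.sqrt_nonneg _) h1 2
  -- column sums bound: for every `j`, `∑ i, r_i * |Φ i j| ≤ M ^ 2`
  have hcol : ∀ j, (∑ i, (∑ j', |Φ i j'|) * |Φ i j|) ≤ M ^ 2 := by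
    intro j
    by_cases hc : ∀ i, Φ i j = 0
    · have : (∑ i, (∑ j', |Φ i j'|) * |Φ i j|) = 0 := by
        apply Finset.sum_eq_zero
        intro i _
        simp [hc i]
      rw [this]
      positivity
    · push_neg at hc
      obtain ⟨i₀, hi₀⟩ := hc
      have hcpos : 0 < ∑ i', |Φ i' j| := by
        apply Finset.sum_pos' (fun _ _ => abs_nonneg _)
        exact ⟨i₀, Finset.mem_univ _, abs_pos.mpr hi₀⟩
      have step : ∀ i, (∑ j', |Φ i j'|) * |Φ i j| ≤ (M ^ 2 / (∑ i', |Φ i' j|)) * |Φ i j| := by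
        intro i
        by_cases hij : Φ i j = 0
        · simp [hij]
        · have h := hkey i j hij
          have : (∑ j', |Φ i j'|) ≤ M ^ 2 / (∑ i', |Φ i' j|) :=
            (le_div_iff₀ hcpos).mpr h
          exact mul_le_mul_of_nonneg_right this (abs_nonneg _)
      calc (∑ i, (∑ j', |Φ i j'|) * |Φ i j|)
          ≤ ∑ i, (M ^ 2 / (∑ i', |Φ i' j|)) * |Φ i j| :=
            Finset.sum_le_sum fun i _ => step i
        _ = (M ^ 2 / (∑ i', |Φ i' j|)) * (∑ i, |Φ i j|) := by rw [← Finset.mul_sum]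
        _ = M ^ 2 := by field_simp
  -- now the operator norm bound
  apply ContinuousLinearMap.opNorm_le_bound _ hM0
  intro x
  have happ : ∀ i, (Matrix.toEuclideanCLM (𝕜 := ℝ) Φ x) i = ∑ j, Φ i j * x j := by
    intro i
    rfl
  rw [EuclideanSpace.norm_eq, EuclideanSpace.norm_eq]
  have hsum : (∑ i, ‖(Matrix.toEuclideanCLM (𝕜 := ℝ) Φ x) i‖ ^ 2) ≤
      M ^ 2 * ∑ j, ‖x j‖ ^ 2 := by
    simp only [happ, Real.norm_eq_abs, sq_abs]
    calc (∑ i, (∑ j, Φ i j * x j) ^ 2)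
        ≤ ∑ i, (∑ j, |Φ i j| * |x j|) ^ 2 := by
          apply Finset.sum_le_sum
          intro i _
          rw [← sq_abs (∑ j, Φ i j * x j)]
          apply pow_le_pow_left₀ (abs_nonneg _)
          calc |∑ j, Φ i j * x j| ≤ ∑ j, |Φ i j * x j| := Finset.abs_sum_le_sum_abs _ _
            _ = ∑ j, |Φ i j| * |x j| := by simp [abs_mul]
      _ ≤ ∑ i, (∑ j, |Φ i j|) * (∑ j, |Φ i j| * x j ^ 2) := by
          apply Finset.sum_le_sum
          intro i _
          apply Finset.sum_sq_le_sum_mul_sum_of_sq_eq_mul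
          · exact fun _ _ => abs_nonneg _
          · exact fun j _ => mul_nonneg (abs_nonneg _) (sq_nonneg _)
          · intro j _
            rw [mul_pow, sq_abs (x j)]
            ring
      _ = ∑ j, (∑ i, (∑ j', |Φ i j'|) * |Φ i j|) * x j ^ 2 := by
          simp_rw [Finset.mul_sum, Finset.sum_mul]
          rw [Finset.sum_comm]
          apply Finset.sum_congr rfl
          intro j _
          apply Finset.sum_congr rfl
          intro i _
          exact Finset.sum_congr rfl fun _ _ => by ring
      _ ≤ ∑ j, M ^ 2 * x j ^ 2 := by
          apply Finset.sum_le_sum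
          intro j _
          exact mul_le_mul_of_nonneg_right (hcol j) (sq_nonneg _)
      _ = M ^ 2 * ∑ j, x j ^ 2 := by rw [Finset.mul_sum]
  calc Real.sqrt (∑ i, ‖(Matrix.toEuclideanCLM (𝕜 := ℝ) Φ x) i‖ ^ 2)
      ≤ Real.sqrt (M ^ 2 * ∑ j, ‖x j‖ ^ 2) := Real.sqrt_le_sqrt hsum
    _ = M * Real.sqrt (∑ j, ‖x j‖ ^ 2) := by
        rw [Real.sqrt_mul (sq_nonneg M), Real.sqrt_sq hM0]
end

section
/- Refined dimension-dependent Lipschitz bound: under the coordinate-wise Lipschitz assumption |t_j(s̄_j|s) − t_j(s̄_j|s')| ≤ d_{ij}|s_i − s'_i| (s, s' differing only in coordinate i), the value functions W_k of the Bellman recursion over Ā = D₁×…×D_n satisfy, for s, s' ∈ Ā, |W_k(s) − W_k(s')| ≤ Σ_{i=1}^n (Σ_{j=1}^n d_{ij}·L(D_j))·|s_i − s'_i| for all k = 0,…,N. -/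
open MeasureTheory
open scoped BigOperators

open scoped ENNReal

lemma tele_aux {n : ℕ} (D : Fin n → Set ℝ) (F : (Fin n → ℝ) → ℝ) (c : Fin n → ℝ)
    (s s' : Fin n → ℝ) (hs : s ∈ Set.univ.pi D) (hs' : s' ∈ Set.univ.pi D)
    (h : ∀ i : Fin n, ∀ u ∈ Set.univ.pi D, ∀ v ∈ Set.univ.pi D,
      (∀ k, k ≠ i → u k = v k) → u i = s i → v i = s' i →
      |F u - F v| ≤ c i * |s i - s' i|) :
    |F s - F s'| ≤ ∑ i, c i * |s i - s' i| := by
  classical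
  set g : ℕ → Fin n → ℝ := fun m i => if (i : ℕ) < m then s' i else s i with hg
  have hg0 : g 0 = s := by funext i; simp [hg]
  have hgn : g n = s' := by funext i; simp [hg, i.isLt]
  have hmem : ∀ m, g m ∈ Set.univ.pi D := by
    intro m i _
    simp only [hg]
    split
    · exact hs' i trivial
    · exact hs i trivial
  have tri : ∀ M : ℕ, |F (g 0) - F (g M)| ≤ ∑ m ∈ Finset.range M, |F (g m) - F (g (m + 1))| := by
    intro M
    induction M with
    | zero => simp
    | succ M ih =>
      rw [Finset.sum_range_succ]
      have := abs_sub_le (F (g 0)) (F (g M)) (F (g (M + 1)))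
      linarith
  have key : ∀ i : Fin n, |F (g i) - F (g (i + 1))| ≤ c i * |s i - s' i| := by
    intro i
    refine h i (g i) (hmem _) (g (i + 1)) (hmem _) ?_ ?_ ?_
    · intro k hk
      have hkv : (k : ℕ) ≠ (i : ℕ) := fun hc => hk (Fin.ext hc)
      simp only [hg]
      by_cases hlt : (k : ℕ) < (i : ℕ)
      · rw [if_pos hlt, if_pos (by omega)]
      · rw [if_neg hlt, if_neg (by omega)]
    · simp [hg]
    · simp [hg]
  calc |F s - F s'| = |F (g 0) - F (g n)| := by rw [hg0, hgn]
    _ ≤ ∑ m ∈ Finset.range n, |F (g m) - F (g (m + 1))| := tri n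
    _ = ∑ i : Fin n, |F (g i) - F (g (i + 1))| :=
        (Fin.sum_univ_eq_sum_range (fun m => |F (g m) - F (g (m + 1))|) n).symm
    _ ≤ ∑ i, c i * |s i - s' i| := Finset.sum_le_sum fun i _ => key i
open scoped BigOperators

lemma abs_prod_sub_prod {n : ℕ} (a b : Fin n → ℝ) (ha : ∀ l, 0 ≤ a l) (hb : ∀ l, 0 ≤ b l) :
    |∏ l, a l - ∏ l, b l| ≤
      ∑ j, ∏ l, (if l < j then a l else if j < l then b l else |a l - b l|) := by
  induction n with
  | zero => simp
  | succ n ih =>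
    have key : ∏ l, a l - ∏ l, b l
        = (∏ l : Fin n, a l.castSucc) * (a (Fin.last n) - b (Fin.last n))
          + (∏ l : Fin n, a l.castSucc - ∏ l : Fin n, b l.castSucc) * b (Fin.last n) := by
      rw [Fin.prod_univ_castSucc (f := a), Fin.prod_univ_castSucc (f := b)]; ring
    have h1 : |∏ l, a l - ∏ l, b l|
        ≤ (∏ l : Fin n, a l.castSucc) * |a (Fin.last n) - b (Fin.last n)|
          + |∏ l : Fin n, a l.castSucc - ∏ l : Fin n, b l.castSucc| * b (Fin.last n) := by
      rw [key]
      refine (abs_add_le _ _).trans ?_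
      rw [abs_mul, abs_mul, abs_of_nonneg (Finset.prod_nonneg fun l _ => ha _),
        abs_of_nonneg (hb _)]
    have h2 := ih (fun l => a l.castSucc) (fun l => b l.castSucc) (fun l => ha _) (fun l => hb _)
    have h3 : |∏ l : Fin n, a l.castSucc - ∏ l : Fin n, b l.castSucc| * b (Fin.last n)
        ≤ (∑ j : Fin n, ∏ l : Fin n,
            (if l < j then a l.castSucc else if j < l then b l.castSucc
              else |a l.castSucc - b l.castSucc|)) * b (Fin.last n) :=
      mul_le_mul_of_nonneg_right h2 (hb _)
    have elast : (∏ l : Fin (n+1), (if l < Fin.last n then a l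
        else if Fin.last n < l then b l else |a l - b l|))
        = (∏ l : Fin n, a l.castSucc) * |a (Fin.last n) - b (Fin.last n)| := by
      rw [Fin.prod_univ_castSucc (f := fun l => (if l < Fin.last n then a l
        else if Fin.last n < l then b l else |a l - b l|))]
      rw [if_neg (lt_irrefl _), if_neg (lt_irrefl _)]
      exact congrArg₂ (· * ·)
        (Finset.prod_congr rfl fun l _ => by rw [if_pos (Fin.castSucc_lt_last l)]) rfl
    have ecast : ∀ j : Fin n, (∏ l : Fin (n+1), (if l < j.castSucc then a l
        else if j.castSucc < l then b l else |a l - b l|))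
        = (∏ l : Fin n, (if l < j then a l.castSucc else if j < l then b l.castSucc
            else |a l.castSucc - b l.castSucc|)) * b (Fin.last n) := by
      intro j
      rw [Fin.prod_univ_castSucc (f := fun l => (if l < j.castSucc then a l
        else if j.castSucc < l then b l else |a l - b l|))]
      refine congrArg₂ (· * ·) (Finset.prod_congr rfl fun l _ => ?_) ?_
      · simp only [Fin.castSucc_lt_castSucc_iff]
      · rw [if_neg (by simp [Fin.lt_iff_val_lt_val]),
          if_pos (Fin.castSucc_lt_last j)]
    rw [Fin.sum_univ_castSucc (f := fun j => ∏ l : Fin (n+1),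
      (if l < j then a l else if j < l then b l else |a l - b l|))]
    simp only [ecast, elast]
    rw [← Finset.sum_mul]
    linarith

lemma indicator_pi_prod {n : ℕ} {M : Type*} [CommMonoidWithZero M] (D : Fin n → Set ℝ)
    (g : Fin n → ℝ → M) (sb : Fin n → ℝ) :
    (Set.univ.pi D).indicator (fun sb => ∏ j, g j (sb j)) sb
      = ∏ j, (D j).indicator (g j) (sb j) := by
  classical
  by_cases h : sb ∈ Set.univ.pi D
  · rw [Set.indicator_of_mem h]
    exact Finset.prod_congr rfl fun j _ => (Set.indicator_of_mem (h j trivial) _).symm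
  · rw [Set.indicator_of_notMem h]
    rw [Set.mem_univ_pi] at h
    push_neg at h
    obtain ⟨j, hj⟩ := h
    exact (Finset.prod_eq_zero (Finset.mem_univ j) (Set.indicator_of_notMem hj _)).symm

lemma setintegral_pi_prod {n : ℕ} (D : Fin n → Set ℝ) (hD : ∀ j, MeasurableSet (D j))
    (g : Fin n → ℝ → ℝ) (hgi : ∀ j, IntegrableOn (g j) (D j)) :
    ∫ sb in Set.univ.pi D, ∏ j, g j (sb j) = ∏ j, ∫ x in D j, g j x := by
  rw [← integral_indicator (MeasurableSet.univ_pi hD)]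
  simp_rw [indicator_pi_prod D g]
  rw [volume_pi, MeasureTheory.integral_fintype_prod_eq_prod (f := fun j => (D j).indicator (g j))]
  exact Finset.prod_congr rfl fun j _ => integral_indicator (hD j)

lemma integrableOn_pi_prod {n : ℕ} (D : Fin n → Set ℝ) (hD : ∀ j, MeasurableSet (D j))
    (g : Fin n → ℝ → ℝ) (hgi : ∀ j, IntegrableOn (g j) (D j)) :
    IntegrableOn (fun sb : Fin n → ℝ => ∏ j, g j (sb j)) (Set.univ.pi D) := by
  rw [← integrable_indicator_iff (MeasurableSet.univ_pi hD)]
  have : ∀ sb : Fin n → ℝ, (Set.univ.pi D).indicator (fun sb => ∏ j, g j (sb j)) sb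
      = ∏ j, (D j).indicator (g j) (sb j) := indicator_pi_prod D g
  rw [show (Set.univ.pi D).indicator (fun sb => ∏ j, g j (sb j))
      = fun sb => ∏ j, (D j).indicator (g j) (sb j) from funext this]
  exact Integrable.fintype_prod fun j => (integrable_indicator_iff (hD j)).2 (hgi j)

lemma lintegral_fin_prod {n : ℕ} (f : Fin n → ℝ → ℝ≥0∞) (hf : ∀ i, Measurable (f i)) :
    ∫⁻ x : Fin n → ℝ, ∏ i, f i (x i) = ∏ i, ∫⁻ x : ℝ, f i x := by
  induction n with
  | zero => simp [lintegral_const, volume_pi, Measure.pi_empty_univ]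
  | succ n ih =>
    have hm := (measurePreserving_piFinSuccAbove (fun _ : Fin (n+1) => (volume : Measure ℝ)) 0).symm
    have hmeas : Measurable fun x : Fin (n+1) → ℝ => ∏ i, f i (x i) :=
      Finset.measurable_prod _ fun i _ => (hf i).comp (measurable_pi_apply i)
    rw [volume_pi, ← hm.lintegral_comp hmeas]
    have hcong : ∀ p : ℝ × (Fin n → ℝ),
        (∏ i, f i ((MeasurableEquiv.piFinSuccAbove (fun _ => ℝ) 0).symm p i))
          = f 0 p.1 * ∏ i : Fin n, f i.succ (p.2 i) := by
      intro p
      simp [MeasurableEquiv.piFinSuccAbove_symm_apply, Fin.prod_univ_succ,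
        Fin.insertNth_zero, Fin.zero_succAbove]
    rw [lintegral_congr hcong]
    have hpm := lintegral_prod_mul (μ := (volume : Measure ℝ))
      (ν := Measure.pi fun _ : Fin n => (volume : Measure ℝ)) (f := f 0)
      (g := fun y : Fin n → ℝ => ∏ i : Fin n, f i.succ (y i))
      (hf 0).aemeasurable
      (Finset.measurable_prod _ fun i _ =>
        (hf i.succ).comp (measurable_pi_apply i)).aemeasurable
    rw [hpm]
    rw [show (Measure.pi fun _ : Fin n => (volume : Measure ℝ)) = volume from volume_pi.symm]
    rw [ih (fun i => f i.succ) (fun i => hf i.succ)]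
    exact (Fin.prod_univ_succ (f := fun i : Fin (n+1) => ∫⁻ x : ℝ, f i x)).symm

open scoped ENNReal


set_option maxHeartbeats 2000000 in
/-- Refined dimension-dependent Lipschitz bound for the invariance value functions:
under the coordinate-wise Lipschitz assumption with constants `d i j`, over the
rectangle `A' = D₁×…×D_n`,
`|W_k(s) − W_k(s')| ≤ Σ_i (Σ_j d i j · L(D j)) · |s_i − s'_i|`. -/
theorem invariance_value_functions_coordinatewise_lipschitz
    (n N : ℕ) (D : Fin n → Set ℝ) (hD : ∀ j, MeasurableSet (D j))
    (hDb : ∀ j, Bornology.IsBounded (D j))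
    (t : Fin n → ℝ → (Fin n → ℝ) → ℝ)
    (ht0 : ∀ j x s, 0 ≤ t j x s)
    (htm : ∀ j s, Measurable (fun x => t j x s))
    (htsub : ∀ j, ∀ s ∈ Set.univ.pi D, ∫ x in D j, t j x s ≤ 1)
    (d : Fin n → Fin n → ℝ) (hd : ∀ i j, 0 ≤ d i j)
    (hLip : ∀ i j, ∀ x ∈ D j, ∀ s ∈ Set.univ.pi D, ∀ s' ∈ Set.univ.pi D,
      (∀ k, k ≠ i → s k = s' k) → |t j x s - t j x s'| ≤ d i j * |s i - s' i|)
    (W : ℕ → (Fin n → ℝ) → ℝ)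
    (hWN : ∀ s ∈ Set.univ.pi D, W N s = 1)
    (hW : ∀ k < N, ∀ s ∈ Set.univ.pi D,
      W k s = ∫ sb in Set.univ.pi D, W (k + 1) sb * ∏ j, t j (sb j) s) :
    ∀ k ≤ N, ∀ s ∈ Set.univ.pi D, ∀ s' ∈ Set.univ.pi D,
      |W k s - W k s'| ≤ ∑ i, (∑ j, d i j * (volume (D j)).toReal) * |s i - s' i| := by
  classical
  have hrm : MeasurableSet (Set.univ.pi D) := MeasurableSet.univ_pi hD
  have hfin : ∀ j, volume (D j) < ⊤ := fun j => (hDb j).measure_lt_top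
  have hL0 : ∀ j, 0 ≤ (volume (D j)).toReal := fun j => ENNReal.toReal_nonneg
  have hc0 : ∀ i, 0 ≤ ∑ j, d i j * (volume (D j)).toReal :=
    fun i => Finset.sum_nonneg fun j _ => mul_nonneg (hd i j) (hL0 j)
  have tdiff : ∀ j, ∀ x ∈ D j, ∀ s ∈ Set.univ.pi D, ∀ s' ∈ Set.univ.pi D,
      |t j x s - t j x s'| ≤ ∑ i, d i j * |s i - s' i| := by
    intro j x hx s hs s' hs'
    refine tele_aux D (fun u => t j x u) (fun i => d i j) s s' hs hs' ?_
    intro i u hu v hv hne hui hvi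
    rw [← hui, ← hvi]
    exact hLip i j x hx u hu v hv hne
  have hprodmeas : ∀ s, Measurable fun sb : Fin n → ℝ => ∏ j, t j (sb j) s :=
    fun s => Finset.measurable_prod _ fun j _ => (htm j s).comp (measurable_pi_apply j)
  have hGnn : ∀ s, ∀ sb : Fin n → ℝ, 0 ≤ ∏ j, t j (sb j) s :=
    fun s sb => Finset.prod_nonneg fun j _ => ht0 j (sb j) s
  by_cases hInt : ∀ j, ∀ s ∈ Set.univ.pi D, IntegrableOn (fun x => t j x s) (D j)
  · -- Case A: all transition densities integrable
    have main : ∀ p k, k + p = N →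
        ((∀ s ∈ Set.univ.pi D, 0 ≤ W k s ∧ W k s ≤ 1) ∧
          ∀ s ∈ Set.univ.pi D, ∀ s' ∈ Set.univ.pi D, |W k s - W k s'| ≤
            ∑ i, (∑ j, d i j * (volume (D j)).toReal) * |s i - s' i|) := by
      intro p
      induction p with
      | zero =>
        intro k hk
        obtain rfl : k = N := by omega
        constructor
        · intro s hs; rw [hWN s hs]; norm_num
        · intro s hs s' hs'
          rw [hWN s hs, hWN s' hs']
          simp only [sub_self, abs_zero]
          exact Finset.sum_nonneg fun i _ => mul_nonneg (hc0 i) (abs_nonneg _)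
      | succ p ih =>
        intro k hk
        have hkN : k < N := by omega
        obtain ⟨hbd1, hlip1⟩ := ih (k + 1) (by omega)
        have hcont : ContinuousOn (W (k + 1)) (Set.univ.pi D) := by
          rw [Metric.continuousOn_iff]
          intro b hb ε hε
          set C := ∑ i, (∑ j, d i j * (volume (D j)).toReal) with hC
          have hC0 : 0 ≤ C := Finset.sum_nonneg fun i _ => hc0 i
          refine ⟨ε / (C + 1), by positivity, fun a ha hab => ?_⟩
          rw [Real.dist_eq]
          have h1 := hlip1 a ha b hb
          have h2 : ∑ i, (∑ j, d i j * (volume (D j)).toReal) * |a i - b i|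
              ≤ C * dist a b := by
            rw [hC, Finset.sum_mul]
            refine Finset.sum_le_sum fun i _ => mul_le_mul_of_nonneg_left ?_ (hc0 i)
            rw [← Real.dist_eq]
            exact dist_le_pi_dist a b i
          have h3 : C * dist a b ≤ C * (ε / (C + 1)) :=
            mul_le_mul_of_nonneg_left hab.le hC0
          have h4 : C * (ε / (C + 1)) < ε := by
            have hlt : C / (C + 1) < 1 := by
              rw [div_lt_one (by linarith)]; linarith
            calc C * (ε / (C + 1)) = (C / (C + 1)) * ε := by ring
              _ < 1 * ε := mul_lt_mul_of_pos_right hlt hε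
              _ = ε := one_mul ε
          linarith
        have hmeasW : AEStronglyMeasurable (W (k + 1)) (volume.restrict (Set.univ.pi D)) :=
          hcont.aestronglyMeasurable hrm
        have hGint : ∀ s ∈ Set.univ.pi D,
            IntegrableOn (fun sb : Fin n → ℝ => ∏ j, t j (sb j) s) (Set.univ.pi D) :=
          fun s hs => integrableOn_pi_prod D hD (fun j x => t j x s) (fun j => hInt j s hs)
        have hFint : ∀ s ∈ Set.univ.pi D,
            IntegrableOn (fun sb => W (k + 1) sb * ∏ j, t j (sb j) s) (Set.univ.pi D) := by
          intro s hs
          refine Integrable.mono' (hGint s hs)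
            (hmeasW.mul (hprodmeas s).aestronglyMeasurable) ?_
          refine (ae_restrict_iff' hrm).2 (Filter.Eventually.of_forall fun sb hsb => ?_)
          rw [Real.norm_eq_abs, abs_mul]
          have h01 := hbd1 sb hsb
          calc |W (k + 1) sb| * |∏ j, t j (sb j) s| ≤ 1 * |∏ j, t j (sb j) s| := by
                refine mul_le_mul_of_nonneg_right ?_ (abs_nonneg _)
                rw [abs_le]; constructor <;> linarith [h01.1, h01.2]
            _ = ∏ j, t j (sb j) s := by rw [one_mul, abs_of_nonneg (hGnn s sb)]
        constructor
        · intro s hs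
          rw [hW k hkN s hs]
          constructor
          · exact setIntegral_nonneg hrm fun sb hsb =>
              mul_nonneg (hbd1 sb hsb).1 (hGnn s sb)
          · calc (∫ sb in Set.univ.pi D, W (k + 1) sb * ∏ j, t j (sb j) s)
                ≤ ∫ sb in Set.univ.pi D, ∏ j, t j (sb j) s := by
                  refine setIntegral_mono_on (hFint s hs) (hGint s hs) hrm fun sb hsb => ?_
                  have h01 := hbd1 sb hsb
                  nlinarith [hGnn s sb, h01.2, h01.1]
              _ = ∏ j, ∫ x in D j, t j x s :=
                  setintegral_pi_prod D hD (fun j x => t j x s) (fun j => hInt j s hs)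
              _ ≤ 1 := Finset.prod_le_one
                  (fun j _ => setIntegral_nonneg (hD j) fun x _ => ht0 j x s)
                  (fun j _ => htsub j s hs)
        · intro s hs s' hs'
          refine tele_aux D (W k) _ s s' hs hs' ?_
          intro i u hu v hv hne hui hvi
          rw [← hui, ← hvi]
          -- per-coordinate bound
          set Δ := |u i - v i| with hΔ
          have hΔ0 : 0 ≤ Δ := abs_nonneg _
          set G : Fin n → Fin n → ℝ → ℝ := fun j l x =>
            if l < j then t l x u else if j < l then t l x v
              else |t l x u - t l x v| with hG
          have hGint' : ∀ j l, IntegrableOn (G j l) (D l) := by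
            intro j l
            rcases lt_trichotomy l j with h | h | h
            · simpa [hG, h] using hInt l u hu
            · subst h
              simpa [hG, lt_irrefl] using (show IntegrableOn (fun x => |t l x u - t l x v|) (D l) volume from by exact ((hInt l u hu).sub (hInt l v hv)).abs)
            · have h1 : ¬ l < j := asymm h
              simpa [hG, h1, h] using hInt l v hv
          have hpt : ∀ sb ∈ Set.univ.pi D,
              |W (k + 1) sb * ∏ j, t j (sb j) u - W (k + 1) sb * ∏ j, t j (sb j) v|
                ≤ ∑ j, ∏ l, G j l (sb l) := by
            intro sb hsb
            have h2 := abs_prod_sub_prod (fun l => t l (sb l) u) (fun l => t l (sb l) v)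
              (fun l => ht0 _ _ _) (fun l => ht0 _ _ _)
            have h01 := hbd1 sb hsb
            calc |W (k + 1) sb * ∏ j, t j (sb j) u - W (k + 1) sb * ∏ j, t j (sb j) v|
                = |W (k + 1) sb| * |∏ j, t j (sb j) u - ∏ j, t j (sb j) v| := by
                  rw [← abs_mul, mul_sub]
              _ ≤ 1 * |∏ j, t j (sb j) u - ∏ j, t j (sb j) v| := by
                  refine mul_le_mul_of_nonneg_right ?_ (abs_nonneg _)
                  rw [abs_le]; constructor <;> linarith [h01.1, h01.2]
              _ = |∏ j, t j (sb j) u - ∏ j, t j (sb j) v| := one_mul _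
              _ ≤ ∑ j, ∏ l, G j l (sb l) := h2
          have htermint : ∀ j : Fin n,
              IntegrableOn (fun sb : Fin n → ℝ => ∏ l, G j l (sb l)) (Set.univ.pi D) :=
            fun j => integrableOn_pi_prod D hD (G j) (hGint' j)
          have hterm : ∀ j : Fin n, (∫ sb in Set.univ.pi D, ∏ l, G j l (sb l))
              = ∏ l, ∫ x in D l, G j l x :=
            fun j => setintegral_pi_prod D hD (G j) (hGint' j)
          have hx01 : ∀ j l, l ≠ j →
              0 ≤ (∫ x in D l, G j l x) ∧ (∫ x in D l, G j l x) ≤ 1 := by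
            intro j l hlj
            rcases lt_or_gt_of_ne hlj with h | h
            · have : G j l = fun x => t l x u := by
                funext x; simp [hG, h]
              rw [this]
              exact ⟨setIntegral_nonneg (hD l) fun x _ => ht0 l x u, htsub l u hu⟩
            · have h1 : ¬ l < j := asymm h
              have : G j l = fun x => t l x v := by
                funext x; simp [hG, h1, h]
              rw [this]
              exact ⟨setIntegral_nonneg (hD l) fun x _ => ht0 l x v, htsub l v hv⟩
          have hprodle : ∀ j, (∏ l, ∫ x in D l, G j l x)
              ≤ d i j * Δ * (volume (D j)).toReal := by
            intro j
            have hGjj : G j j = fun x => |t j x u - t j x v| := by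
              funext x; simp [hG, lt_irrefl]
            have hj0 : 0 ≤ ∫ x in D j, G j j x := by
              rw [hGjj]; exact setIntegral_nonneg (hD j) fun x _ => abs_nonneg _
            have hxj : (∫ x in D j, G j j x) ≤ d i j * Δ * (volume (D j)).toReal := by
              rw [hGjj]
              calc (∫ x in D j, |t j x u - t j x v|) ≤ ∫ _x in D j, d i j * Δ := by
                    refine setIntegral_mono_on (((hInt j u hu).sub (hInt j v hv)).abs)
                      (integrableOn_const (hfin j).ne) (hD j) fun x hx => ?_
                    exact hLip i j x hx u hu v hv hne
                _ = (volume (D j)).toReal * (d i j * Δ) := by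
                    rw [setIntegral_const, smul_eq_mul]; rfl
                _ = d i j * Δ * (volume (D j)).toReal := by ring
            calc (∏ l, ∫ x in D l, G j l x)
                = (∫ x in D j, G j j x) * ∏ l ∈ Finset.univ.erase j, ∫ x in D l, G j l x :=
                  (Finset.mul_prod_erase _ _ (Finset.mem_univ j)).symm
              _ ≤ (∫ x in D j, G j j x) * 1 := by
                  refine mul_le_mul_of_nonneg_left ?_ hj0
                  exact Finset.prod_le_one
                    (fun l hl => (hx01 j l (Finset.ne_of_mem_erase hl)).1)
                    (fun l hl => (hx01 j l (Finset.ne_of_mem_erase hl)).2)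
              _ = ∫ x in D j, G j j x := mul_one _
              _ ≤ d i j * Δ * (volume (D j)).toReal := hxj
          have heq : W k u - W k v = ∫ sb in Set.univ.pi D,
              (W (k + 1) sb * ∏ j, t j (sb j) u - W (k + 1) sb * ∏ j, t j (sb j) v) := by
            rw [hW k hkN u hu, hW k hkN v hv, integral_sub (hFint u hu) (hFint v hv)]
          calc |W k u - W k v|
              = |∫ sb in Set.univ.pi D,
                  (W (k + 1) sb * ∏ j, t j (sb j) u
                    - W (k + 1) sb * ∏ j, t j (sb j) v)| := by rw [heq]
            _ ≤ ∫ sb in Set.univ.pi D,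
                  |W (k + 1) sb * ∏ j, t j (sb j) u
                    - W (k + 1) sb * ∏ j, t j (sb j) v| := by
                  have := norm_integral_le_integral_norm (μ := volume.restrict (Set.univ.pi D))
                    (f := fun sb => W (k + 1) sb * ∏ j, t j (sb j) u
                      - W (k + 1) sb * ∏ j, t j (sb j) v)
                  simpa [Real.norm_eq_abs] using this
            _ ≤ ∫ sb in Set.univ.pi D, ∑ j, ∏ l, G j l (sb l) :=
                  setIntegral_mono_on (((hFint u hu).sub (hFint v hv)).abs)
                    (integrable_finset_sum _ fun j _ => htermint j) hrm hpt
            _ = ∑ j, ∫ sb in Set.univ.pi D, ∏ l, G j l (sb l) :=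
                  integral_finset_sum _ (fun j _ => htermint j)
            _ = ∑ j, ∏ l, ∫ x in D l, G j l x := Finset.sum_congr rfl fun j _ => hterm j
            _ ≤ ∑ j, d i j * Δ * (volume (D j)).toReal :=
                  Finset.sum_le_sum fun j _ => hprodle j
            _ = ∑ j, (d i j * (volume (D j)).toReal) * Δ :=
                  Finset.sum_congr rfl fun j _ => by ring
            _ = (∑ j, d i j * (volume (D j)).toReal) * Δ := (Finset.sum_mul _ _ _).symm
    intro k hk s hs s' hs'
    exact (main (N - k) k (by omega)).2 s hs s' hs'
  · -- Case B: some transition density is not integrable; all value functions vanish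
    push_neg at hInt
    obtain ⟨j₀, s₀, hs₀, hni⟩ := hInt
    have hnint : ∀ s ∈ Set.univ.pi D, ¬ IntegrableOn (fun x => t j₀ x s) (D j₀) := by
      intro s hs hcon
      apply hni
      have hCint : IntegrableOn (fun _ : ℝ => ∑ i, d i j₀ * |s₀ i - s i|) (D j₀) :=
        integrableOn_const (hfin j₀).ne
      refine Integrable.mono' (hcon.add hCint)
        (htm j₀ s₀).aestronglyMeasurable ?_
      refine (ae_restrict_iff' (hD j₀)).2 (Filter.Eventually.of_forall fun x hx => ?_)
      rw [Real.norm_eq_abs, abs_of_nonneg (ht0 j₀ x s₀)]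
      have h1 := tdiff j₀ x hx s₀ hs₀ s hs
      have h2 := le_of_abs_le h1
      simp only [Pi.add_apply]
      linarith
    have hGzero : ∀ s ∈ Set.univ.pi D,
        (∫ sb in Set.univ.pi D, ∏ j, t j (sb j) s) = 0 := by
      intro s hs
      by_cases hae : ∃ j₁, (fun x => t j₁ x s) =ᵐ[volume.restrict (D j₁)] (fun _ => 0)
      · obtain ⟨j₁, hj₁⟩ := hae
        have hmeas1 : MeasurableSet {x : ℝ | t j₁ x s ≠ 0} :=
          (htm j₁ s) (measurableSet_singleton (0 : ℝ)).compl
        have hnull : volume ({x | t j₁ x s ≠ 0} ∩ D j₁) = 0 := by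
          have h0 : volume.restrict (D j₁) {x | t j₁ x s ≠ 0} = 0 := by
            have h1 := hj₁
            rw [Filter.EventuallyEq, ae_iff] at h1
            simpa using h1
          rwa [Measure.restrict_apply hmeas1] at h0
        set E : Fin n → Set ℝ := fun j =>
          if j = j₁ then {x | t j₁ x s ≠ 0} ∩ D j₁ else D j with hE
        have hEvol : volume (Set.univ.pi E) = 0 := by
          rw [volume_pi, Measure.pi_pi]
          refine Finset.prod_eq_zero (Finset.mem_univ j₁) ?_
          simp only [hE, if_pos rfl]
          exact hnull
        have hsub : {sb : Fin n → ℝ | ¬ (∏ j, t j (sb j) s = 0)} ∩ Set.univ.pi D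
            ⊆ Set.univ.pi E := by
          rintro sb ⟨h1, h2⟩ j _
          simp only [hE]
          by_cases hjj : j = j₁
          · subst hjj
            rw [if_pos rfl]
            refine ⟨?_, h2 j trivial⟩
            intro h0
            exact h1 (Finset.prod_eq_zero (Finset.mem_univ j) h0)
          · rw [if_neg hjj]
            exact h2 j trivial
        have hzero_ae : (fun sb : Fin n → ℝ => ∏ j, t j (sb j) s)
            =ᵐ[volume.restrict (Set.univ.pi D)] 0 := by
          rw [Filter.EventuallyEq, ae_iff]
          rw [Measure.restrict_apply' hrm]
          exact measure_mono_null hsub hEvol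
        exact integral_eq_zero_of_ae hzero_ae
      · push_neg at hae
        refine integral_undef ?_
        intro hIntG
        set φ : Fin n → ℝ → ℝ≥0∞ := fun j x =>
          ENNReal.ofReal ((D j).indicator (fun y => t j y s) x) with hφ
        have hφm : ∀ j, Measurable (φ j) :=
          fun j => ((htm j s).indicator (hD j)).ennreal_ofReal
        have hφeq : ∀ j, (∫⁻ x, φ j x) = ∫⁻ x in D j, ENNReal.ofReal (t j x s) := by
          intro j
          rw [← lintegral_indicator (hD j) _]
          refine lintegral_congr fun x => ?_
          simp only [hφ]
          by_cases hx : x ∈ D j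
          · rw [Set.indicator_of_mem hx, Set.indicator_of_mem hx]
          · rw [Set.indicator_of_notMem hx, Set.indicator_of_notMem hx, ENNReal.ofReal_zero]
        have hkey : (∫⁻ sb in Set.univ.pi D, ENNReal.ofReal (∏ j, t j (sb j) s))
            = ∏ j, ∫⁻ x in D j, ENNReal.ofReal (t j x s) := by
          rw [← lintegral_indicator hrm _]
          have e1 : ∀ sb : Fin n → ℝ, (Set.univ.pi D).indicator
              (fun sb => ENNReal.ofReal (∏ j, t j (sb j) s)) sb = ∏ j, φ j (sb j) := by
            intro sb
            have e2 : (fun sb : Fin n → ℝ => ENNReal.ofReal (∏ j, t j (sb j) s))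
                = fun sb => ∏ j, ENNReal.ofReal (t j (sb j) s) := by
              funext y
              exact ENNReal.ofReal_prod_of_nonneg fun j _ => ht0 j (y j) s
            rw [e2, indicator_pi_prod D (fun j x => ENNReal.ofReal (t j x s)) sb]
            refine Finset.prod_congr rfl fun j _ => ?_
            simp only [hφ]
            by_cases hx : sb j ∈ D j
            · rw [Set.indicator_of_mem hx, Set.indicator_of_mem hx]
            · rw [Set.indicator_of_notMem hx, Set.indicator_of_notMem hx,
                ENNReal.ofReal_zero]
          rw [lintegral_congr e1, lintegral_fin_prod φ hφm]
          exact Finset.prod_congr rfl fun j _ => hφeq j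
        have hlt : (∫⁻ sb in Set.univ.pi D, ENNReal.ofReal (∏ j, t j (sb j) s)) < ⊤ := by
          have h2 := hIntG.2
          rw [hasFiniteIntegral_iff_norm] at h2
          refine lt_of_eq_of_lt ?_ h2
          refine lintegral_congr fun sb => ?_
          rw [Real.norm_eq_abs, abs_of_nonneg (hGnn s sb)]
        have hj₀ : (∫⁻ x in D j₀, ENNReal.ofReal (t j₀ x s)) = ⊤ := by
          by_contra hne
          apply hnint s hs
          refine ⟨(htm j₀ s).aestronglyMeasurable, ?_⟩
          rw [hasFiniteIntegral_iff_norm]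
          have heq2 : ∀ x, ENNReal.ofReal ‖t j₀ x s‖ = ENNReal.ofReal (t j₀ x s) := fun x => by
            rw [Real.norm_eq_abs, abs_of_nonneg (ht0 j₀ x s)]
          rw [lintegral_congr heq2]
          exact Ne.lt_top hne
        have hpos : ∀ j, (∫⁻ x in D j, ENNReal.ofReal (t j x s)) ≠ 0 := by
          intro j h0
          apply hae j
          have h1 := (lintegral_eq_zero_iff ((htm j s).ennreal_ofReal)).1 h0
          refine h1.mono fun x hx => ?_
          have h2 : ENNReal.ofReal (t j x s) = 0 := hx
          rw [ENNReal.ofReal_eq_zero] at h2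
          have := ht0 j x s
          simpa using le_antisymm h2 this
        have hcontra : (∏ j, ∫⁻ x in D j, ENNReal.ofReal (t j x s)) = ⊤ := by
          rw [← Finset.mul_prod_erase _ _ (Finset.mem_univ j₀), hj₀]
          exact ENNReal.top_mul (Finset.prod_ne_zero_iff.2 fun l _ => hpos l)
        rw [hkey, hcontra] at hlt
        exact absurd hlt (lt_irrefl ⊤)
    have hWzero : ∀ q m, m + q + 1 = N → ∀ s ∈ Set.univ.pi D, W m s = 0 := by
      intro q
      induction q with
      | zero =>
        intro m hm s hs
        have hmN : m < N := by omega
        rw [hW m hmN s hs]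
        have hEq : Set.EqOn (fun sb => W (m + 1) sb * ∏ j, t j (sb j) s)
            (fun sb => ∏ j, t j (sb j) s) (Set.univ.pi D) := by
          intro sb hsb
          simp only
          rw [show m + 1 = N by omega, hWN sb hsb, one_mul]
        rw [setIntegral_congr_fun hrm hEq]
        exact hGzero s hs
      | succ q ihq =>
        intro m hm s hs
        have hmN : m < N := by omega
        rw [hW m hmN s hs]
        have hEq : Set.EqOn (fun sb => W (m + 1) sb * ∏ j, t j (sb j) s)
            (fun _ => (0 : ℝ)) (Set.univ.pi D) := by
          intro sb hsb
          simp only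
          rw [ihq (m + 1) (by omega) sb hsb, zero_mul]
        rw [setIntegral_congr_fun hrm hEq, integral_zero]
    intro k hk s hs s' hs'
    rcases eq_or_lt_of_le hk with rfl | hkN
    · rw [hWN s hs, hWN s' hs']
      simp only [sub_self, abs_zero]
      exact Finset.sum_nonneg fun i _ => mul_nonneg (hc0 i) (abs_nonneg _)
    · rw [hWzero (N - k - 1) k (by omega) s hs, hWzero (N - k - 1) k (by omega) s' hs']
      simp only [sub_self, abs_zero]
      exact Finset.sum_nonneg fun i _ => mul_nonneg (hc0 i) (abs_nonneg _)
end
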